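/- Let ε > 0, ω ∈ ℝ with 0 < |ωε| and ωε → 0, and let s, c be reals with s ≠ 0, c ≠ 0, s² + c² = 1. Consider the quadratic equation r² + (s²/(iωε²c²)) r + 1/ε² = 0 in r ∈ ℂ. Its two roots r₁, r₂ satisfy r₁·r₂ = 1/ε² and r₁ + r₂ = -s²/(iωε²c²); moreover, if |ωε| ≤ s²c²/(4) (so that the discriminant is dominated by its first term), then there is a root r₂ with |r₂ + iωc²/s²| ≤ C|ω|·|ωε|² for some constant C depending only on s, c. -/

import Mathlib

open Complex

theorem ekman_quadratic_roots
    (s c : ℝ) (hs : s ≠ 0) (hc : c ≠ 0) (hsc : s^2 + c^2 = 1) :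
    (∀ (ε ω : ℝ) (r1 r2 : ℂ), 0 < ε → ω ≠ 0 → 0 < |ω * ε| →
      r1^2 + ((s : ℂ)^2 / (I * ω * ε^2 * c^2)) * r1 + 1 / (ε : ℂ)^2 = 0 →
      r2^2 + ((s : ℂ)^2 / (I * ω * ε^2 * c^2)) * r2 + 1 / (ε : ℂ)^2 = 0 →
      r1 ≠ r2 →
      r1 * r2 = 1 / (ε : ℂ)^2 ∧ r1 + r2 = -((s : ℂ)^2 / (I * ω * ε^2 * c^2))) ∧
    (∃ C : ℝ, 0 < C ∧
      ∀ (ε ω : ℝ), 0 < ε → ω ≠ 0 → 0 < |ω * ε| → |ω * ε| ≤ s^2 * c^2 / 4 →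
        ∃ r2 : ℂ,
          r2^2 + ((s : ℂ)^2 / (I * ω * ε^2 * c^2)) * r2 + 1 / (ε : ℂ)^2 = 0 ∧
          ‖r2 + I * ω * c^2 / s^2‖ ≤ C * |ω| * |ω * ε|^2) := by
  have hsC : (s:ℂ) ≠ 0 := by exact_mod_cast hs
  have hcC : (c:ℂ) ≠ 0 := by exact_mod_cast hc
  have hs2 : (0:ℝ) < s^2 := by positivity
  have hc2 : (0:ℝ) < c^2 := by positivity
  have hc2le : c^2 ≤ 1 := by nlinarith
  constructor
  · intro ε ω r1 r2 hε hω _ h1 h2 hne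
    have hsum : r1 + r2 = -((s : ℂ)^2 / (I * ω * ε^2 * c^2)) := by
      have h : (r1 - r2) * (r1 + r2 + (s : ℂ)^2 / (I * ω * ε^2 * c^2)) = 0 := by
        linear_combination h1 - h2
      rcases mul_eq_zero.1 h with h | h
      · exact absurd (sub_eq_zero.1 h) hne
      · linear_combination h
    refine ⟨?_, hsum⟩
    linear_combination r1 * hsum - h1
  · refine ⟨4 * c^6 / s^6, by positivity, ?_⟩
    intro ε ω hε hω hωε hsmall
    have hεC : (ε:ℂ) ≠ 0 := by exact_mod_cast hε.ne'
    have hωC : (ω:ℂ) ≠ 0 := by exact_mod_cast hω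
    set b : ℂ := (s : ℂ)^2 / (I * ω * ε^2 * c^2) with hb
    set a : ℂ := -(I * ω * c^2 / s^2) with ha
    obtain ⟨w, hw⟩ := IsAlgClosed.exists_pow_nat_eq (b^2 - 4 / (ε:ℂ)^2) (n := 2) (by norm_num)
    set rp : ℂ := (-b + w) / 2 with hrp
    set rm : ℂ := (-b - w) / 2 with hrm
    have hrpe : rp^2 + b * rp + 1 / (ε:ℂ)^2 = 0 := by
      rw [hrp]; linear_combination (1/4 : ℂ) * hw
    have hrme : rm^2 + b * rm + 1 / (ε:ℂ)^2 = 0 := by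
      rw [hrm]; linear_combination (1/4 : ℂ) * hw
    -- key identity: b * a + 1/ε^2 = 0
    have hba : b * a + 1 / (ε:ℂ)^2 = 0 := by
      have hden2 : I * (ω:ℂ) * (ε:ℂ)^2 * (c:ℂ)^2 * (s:ℂ)^2 ≠ 0 := by
        simp [Complex.I_ne_zero, hωC, hεC, hcC, hsC]
      rw [hb, ha]
      field_simp [Complex.I_ne_zero]
      ring
    have hfact : (a - rp) * (a - rm) = a^2 := by
      rw [hrp, hrm]
      linear_combination hba - (1/4 : ℂ) * hw
    -- norms
    have hωpos : (0:ℝ) < |ω| := abs_pos.2 hω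
    have hA : ‖a‖ = |ω| * c^2 / s^2 := by
      rw [ha, norm_neg]
      simp only [norm_div, norm_mul, norm_pow, Complex.norm_I, Complex.norm_real,
        Real.norm_eq_abs, _root_.sq_abs]
      ring
    have hB : ‖b‖ = s^2 / (|ω| * ε^2 * c^2) := by
      rw [hb]
      simp only [norm_div, norm_mul, norm_pow, Complex.norm_I, Complex.norm_real,
        Real.norm_eq_abs, _root_.sq_abs]
      ring
    have hBpos : 0 < ‖b‖ := by rw [hB]; positivity
    -- A ≤ B / 4
    have hAB : ‖a‖ ≤ ‖b‖ / 4 := by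
      have h1 : |ω| * ε = |ω * ε| := by rw [abs_mul, abs_of_pos hε]
      have h2 : (|ω| * ε)^2 ≤ (s^2 * c^2 / 4)^2 := by
        rw [h1]; exact pow_le_pow_left₀ (abs_nonneg _) hsmall 2
      have hc8 : (c^2)^4 ≤ 1 := pow_le_one₀ (sq_nonneg c) hc2le
      have h3 := mul_le_mul_of_nonneg_right h2 (by positivity : (0:ℝ) ≤ 4 * c^4)
      have h5 := mul_le_mul_of_nonneg_left hc8 (by positivity : (0:ℝ) ≤ s^4 / 4)
      have h4 : 4 * |ω|^2 * ε^2 * c^4 ≤ s^4 := by nlinarith [hs2]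
      have hB4 : ‖b‖ / 4 = s^2 / (4 * (|ω| * ε^2 * c^2)) := by rw [hB]; ring
      rw [hA, hB4, div_le_div_iff₀ hs2 (by positivity)]
      nlinarith [h4]
    -- far root bound
    have hsum2 : (a - rp) + (a - rm) = 2 * a + b := by rw [hrp, hrm]; ring
    have h2a : ‖(2:ℂ) * a‖ = 2 * ‖a‖ := by rw [norm_mul]; norm_num
    have hlow : ‖b‖ - 2 * ‖a‖ ≤ ‖2 * a + b‖ := by
      have h := norm_sub_le (2 * a + b) (2 * a)
      rw [add_sub_cancel_left, h2a] at h
      linarith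
    have htri : ‖2 * a + b‖ ≤ ‖a - rp‖ + ‖a - rm‖ := hsum2 ▸ norm_add_le _ _
    have hfar : ‖b‖ / 4 ≤ max ‖a - rp‖ ‖a - rm‖ := by
      have hl := le_max_left ‖a - rp‖ ‖a - rm‖
      have hr := le_max_right ‖a - rp‖ ‖a - rm‖
      linarith
    have hprod : ‖a - rp‖ * ‖a - rm‖ = ‖a‖^2 := by
      rw [← norm_mul, hfact, norm_pow]
    have hbound : ∀ r : ℂ, ‖a - r‖ ≤ 4 * ‖a‖^2 / ‖b‖ →
        (r^2 + b * r + 1 / (ε:ℂ)^2 = 0) →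
        ‖r + I * ω * c^2 / s^2‖ ≤ 4 * c^6 / s^6 * |ω| * |ω * ε|^2 := by
      intro r hr _
      have hrw : r + I * ω * c^2 / s^2 = -(a - r) := by rw [ha]; ring
      rw [hrw, norm_neg]
      refine hr.trans (le_of_eq ?_)
      rw [hA, hB, abs_mul, abs_of_pos hε]
      field_simp
    rcases le_total ‖a - rp‖ ‖a - rm‖ with hle | hle
    · refine ⟨rp, hrpe, hbound rp ?_ hrpe⟩
      have hq : ‖b‖ ≤ 4 * ‖a - rm‖ := by
        have := (max_eq_right hle) ▸ hfar; linarith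
      rw [le_div_iff₀ hBpos]
      have hm := mul_le_mul_of_nonneg_left hq (norm_nonneg (a - rp))
      calc ‖a - rp‖ * ‖b‖ ≤ ‖a - rp‖ * (4 * ‖a - rm‖) := hm
        _ = 4 * (‖a - rp‖ * ‖a - rm‖) := by ring
        _ = 4 * ‖a‖^2 := by rw [hprod]
    · refine ⟨rm, hrme, hbound rm ?_ hrme⟩
      have hq : ‖b‖ ≤ 4 * ‖a - rp‖ := by
        have := (max_eq_left hle) ▸ hfar; linarith
      rw [le_div_iff₀ hBpos]
      have hm := mul_le_mul_of_nonneg_left hq (norm_nonneg (a - rm))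
      calc ‖a - rm‖ * ‖b‖ ≤ ‖a - rm‖ * (4 * ‖a - rp‖) := hm
        _ = 4 * (‖a - rp‖ * ‖a - rm‖) := by ring
        _ = 4 * ‖a‖^2 := by rw [hprod]
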